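/- Let G be a ternary semigroup, X a real Banach space, and φ : G × G × G → [0,∞) a function such that for all x, y, z ∈ G the series (1/3)·∑_{n=0}^∞ 3^{-n} φ(x^{3^n}, y^{3^n}, z^{3^n}) converges. If f : G → X satisfies ‖f([xyz]) − f(x) − f(y) − f(z)‖ ≤ φ(x,y,z) for all x, y, z ∈ G, then for each x ∈ G the sequence (3^{-n} f(x^{3^n}))_{n≥0} converges in X. -/
import Mathlib


open Filter Topology

/-- Iterated cube: `cubeIter op x n = x^{3^n}` where `x³ = op x x x`. -/
def cubeIter {G : Type*} (op : G → G → G → G) (x : G) : ℕ → G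
  | 0 => x
  | n + 1 => op (cubeIter op x n) (cubeIter op x n) (cubeIter op x n)

theorem stmt_5 {G : Type*} (op : G → G → G → G)
    (assoc : ∀ x y z u v : G,
      op (op x y z) u v = op x (op y z u) v ∧
      op x (op y z u) v = op x y (op z u v))
    {X : Type*} [NormedAddCommGroup X] [NormedSpace ℝ X] [CompleteSpace X]
    (φ : G → G → G → ℝ) (hφ : ∀ x y z, 0 ≤ φ x y z)
    (hconv : ∀ x y z : G, Summable (fun n : ℕ =>
      ((1 : ℝ) / 3) ^ n * φ (cubeIter op x n) (cubeIter op y n) (cubeIter op z n)))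
    (f : G → X)
    (hf : ∀ x y z : G, ‖f (op x y z) - f x - f y - f z‖ ≤ φ x y z) :
    ∀ x : G, ∃ L : X,
      Tendsto (fun n : ℕ => ((1 : ℝ) / 3) ^ n • f (cubeIter op x n)) atTop (𝓝 L) := by
  intro x
  set a : ℕ → X := fun n => ((1 : ℝ) / 3) ^ n • f (cubeIter op x n) with ha
  have hcauchy : CauchySeq a := by
    apply cauchySeq_of_dist_le_of_summable
      (fun n => ((1 : ℝ)/3) * (((1 : ℝ)/3) ^ n *
        φ (cubeIter op x n) (cubeIter op x n) (cubeIter op x n)))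
    · intro n
      have key := hf (cubeIter op x n) (cubeIter op x n) (cubeIter op x n)
      have : dist (a n) (a (n + 1)) =
          ((1 : ℝ)/3) ^ (n + 1) *
            ‖f (cubeIter op x (n+1)) - f (cubeIter op x n) - f (cubeIter op x n)
              - f (cubeIter op x n)‖ := by
        rw [dist_eq_norm]
        have h1 : a n - a (n + 1) =
            -(((1 : ℝ)/3) ^ (n+1) • (f (cubeIter op x (n+1)) - f (cubeIter op x n)
              - f (cubeIter op x n) - f (cubeIter op x n))) := by
          simp only [ha, pow_succ]
          rw [smul_sub, smul_sub, smul_sub]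
          have h3 : (((1:ℝ)/3) ^ n * (1/3)) • f (cubeIter op x n)
              + (((1:ℝ)/3) ^ n * (1/3)) • f (cubeIter op x n)
              + (((1:ℝ)/3) ^ n * (1/3)) • f (cubeIter op x n)
              = ((1:ℝ)/3) ^ n • f (cubeIter op x n) := by
            rw [← add_smul, ← add_smul]
            congr 1
            ring
          abel_nf
          rw [← h3]
          abel
        rw [h1, norm_neg, norm_smul]
        simp [abs_of_nonneg]
      rw [this]
      have hcube : cubeIter op x (n+1) =
          op (cubeIter op x n) (cubeIter op x n) (cubeIter op x n) := rfl
      calc ((1 : ℝ)/3) ^ (n + 1) * ‖f (cubeIter op x (n+1)) - f (cubeIter op x n)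
            - f (cubeIter op x n) - f (cubeIter op x n)‖
          ≤ ((1 : ℝ)/3) ^ (n + 1) *
            φ (cubeIter op x n) (cubeIter op x n) (cubeIter op x n) := by
            apply mul_le_mul_of_nonneg_left _ (by positivity)
            rw [hcube]; exact key
        _ = ((1 : ℝ)/3) * (((1 : ℝ)/3) ^ n *
            φ (cubeIter op x n) (cubeIter op x n) (cubeIter op x n)) := by ring
    · exact (hconv x x x).mul_left _
  exact cauchySeq_tendsto_of_complete hcauchy
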